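/- arXiv:2105.13927 — 3 statements merged into one kernel-verified Lean document; each statement's English description precedes it below -/
import Mathlib

section
/- For a dimension function Φ (i.e., Φ:(0,1)→ℝ⁺ with x^{1+Φ(x)} decreasing to 0 as x↓0) with Φ(x) ≤ C/|log x| for all 0 < x ≤ x₀ (some C, x₀ > 0), the upper Φ-dimension of any Borel probability measure μ on a bounded metric space equals its upper Assouad dimension dim_A μ. -/
open Set Metric MeasureTheory Filter

/-- A dimension function: `Φ : (0,1) → ℝ⁺` such that `x ^ (1 + Φ x)` decreases to `0`
as `x` decreases to `0`. -/
def IsDimFun (Φ : ℝ → ℝ) : Prop :=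
  (∀ x ∈ Ioo (0:ℝ) 1, 0 < Φ x) ∧
  StrictMonoOn (fun x : ℝ => x ^ (1 + Φ x)) (Ioo (0:ℝ) 1) ∧
  Tendsto (fun x : ℝ => x ^ (1 + Φ x)) (nhdsWithin 0 (Ioo (0:ℝ) 1)) (nhds 0)

/-- The upper `Φ`-dimension of a measure. -/
noncomputable def upperPhiDim {X : Type*} [MetricSpace X] [MeasurableSpace X] (Φ : ℝ → ℝ)
    (μ : Measure X) : ℝ :=
  sInf {d : ℝ | ∃ C₁ > (0:ℝ), ∃ C₂ > (0:ℝ), ∀ x : X, (∀ ε > (0:ℝ), 0 < μ (ball x ε)) →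
    ∀ R r : ℝ, 0 < r → r < R ^ (1 + Φ R) → R ^ (1 + Φ R) ≤ R → R ≤ C₁ →
      (μ (ball x R)).toReal ≤ C₂ * (R / r) ^ d * (μ (ball x r)).toReal}

/-- If `Φ(x) ≤ C/|log x|` for small `x`, then the upper `Φ`-dimension of any Borel
probability measure on a bounded metric space equals its upper Assouad dimension
(the `Φ ≡ 0` case). -/
theorem upperPhiDim_eq_assouad_of_le_div_neg_log
    {X : Type*} [MetricSpace X] [MeasurableSpace X] [BorelSpace X]
    (hX : Bornology.IsBounded (univ : Set X))
    (μ : Measure X) [IsProbabilityMeasure μ]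
    (Φ : ℝ → ℝ) (hΦ : IsDimFun Φ)
    (C x₀ : ℝ) (hC : 0 < C) (hx₀ : 0 < x₀)
    (hle : ∀ x : ℝ, 0 < x → x ≤ x₀ → Φ x ≤ C / |Real.log x|) :
    upperPhiDim Φ μ = upperPhiDim (fun _ => 0) μ := by
  unfold upperPhiDim
  congr 1
  ext d
  simp only [mem_setOf_eq, add_zero, Real.rpow_one]
  constructor
  · -- hard direction: Φ-bound implies Assouad bound
    rintro ⟨C₁, hC₁, C₂, hC₂, h⟩
    refine ⟨min C₁ (min x₀ (1/2)), by positivity,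
      C₂ * max 1 ((2 * Real.exp C) ^ d), by positivity, ?_⟩
    intro x hx R r hr hrR _ hRC
    have hR0 : 0 < R := hr.trans hrR
    have hRC₁ : R ≤ C₁ := hRC.trans (min_le_left _ _)
    have hRx₀ : R ≤ x₀ := hRC.trans ((min_le_right _ _).trans (min_le_left _ _))
    have hRhalf : R ≤ 1/2 := hRC.trans ((min_le_right _ _).trans (min_le_right _ _))
    have hRlt1 : R < 1 := lt_of_le_of_lt hRhalf (by norm_num)
    have hΦR : 0 < Φ R := hΦ.1 R ⟨hR0, hRlt1⟩
    have hkey : R ^ (1 + Φ R) ≤ R := by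
      calc R ^ (1 + Φ R) = R * R ^ Φ R := by rw [Real.rpow_add hR0, Real.rpow_one]
        _ ≤ R * 1 := mul_le_mul_of_nonneg_left
            (Real.rpow_le_one hR0.le hRlt1.le hΦR.le) hR0.le
        _ = R := mul_one R
    have hpow0 : 0 < R ^ (1 + Φ R) := Real.rpow_pos_of_pos hR0 _
    have hexp : R ^ (-Φ R) ≤ Real.exp C := by
      rw [Real.rpow_def_of_pos hR0]
      apply Real.exp_le_exp.mpr
      have hlog : Real.log R < 0 := Real.log_neg hR0 hRlt1
      have h1 : Φ R ≤ C / (-Real.log R) := by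
        have := hle R hR0 hRx₀
        rwa [abs_of_neg hlog] at this
      have h2 : Φ R * (-Real.log R) ≤ C :=
        (le_div_iff₀ (by linarith)).mp h1
      nlinarith
    have hμr : (μ (ball x r)).toReal ≥ 0 := ENNReal.toReal_nonneg
    have hmax1 : (1:ℝ) ≤ max 1 ((2 * Real.exp C) ^ d) := le_max_left _ _
    rcases lt_or_ge r (R ^ (1 + Φ R)) with hcase | hcase
    · have := h x hx R r hr hcase hkey hRC₁
      refine this.trans ?_
      have hrpow : (0:ℝ) ≤ (R / r) ^ d := (Real.rpow_pos_of_pos (by positivity) d).le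
      calc C₂ * (R / r) ^ d * (μ (ball x r)).toReal
          = C₂ * 1 * (R / r) ^ d * (μ (ball x r)).toReal := by ring
        _ ≤ C₂ * max 1 ((2 * Real.exp C) ^ d) * (R / r) ^ d * (μ (ball x r)).toReal := by
            gcongr
    · -- r ≥ R^(1+Φ R); use s = R^(1+Φ R)/2
      set s := R ^ (1 + Φ R) / 2 with hs_def
      have hs0 : 0 < s := by positivity
      have hsr : s < R ^ (1 + Φ R) := half_lt_self hpow0
      have hsler : s ≤ r := hsr.le.trans hcase
      have hb := h x hx R s hs0 hsr hkey hRC₁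
      have hmono : (μ (ball x s)).toReal ≤ (μ (ball x r)).toReal :=
        ENNReal.toReal_mono (measure_ne_top μ _)
          (measure_mono (ball_subset_ball hsler))
      have hRs : R / s = 2 * R ^ (-Φ R) := by
        rw [hs_def, div_div_eq_mul_div, mul_comm]
        rw [show -Φ R = 1 - (1 + Φ R) by ring, Real.rpow_sub hR0, Real.rpow_one]
        ring
      have hRs_pos : 0 < R / s := by positivity
      have hRr_pos : 0 < R / r := by positivity
      have hRr1 : 1 ≤ R / r := (one_le_div hr).mpr hrR.le
      have hkey2 : (R / s) ^ d ≤ max 1 ((2 * Real.exp C) ^ d) * (R / r) ^ d := by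
        rcases le_or_gt 0 d with hd | hd
        · have h1 : (R / s) ^ d ≤ (2 * Real.exp C) ^ d := by
            apply Real.rpow_le_rpow hRs_pos.le _ hd
            rw [hRs]
            have : (0:ℝ) < Real.exp C := Real.exp_pos C
            nlinarith
          have h2 : (1:ℝ) ≤ (R / r) ^ d := Real.one_le_rpow hRr1 hd
          calc (R / s) ^ d ≤ (2 * Real.exp C) ^ d := h1
            _ ≤ max 1 ((2 * Real.exp C) ^ d) * 1 := by
                rw [mul_one]; exact le_max_right _ _
            _ ≤ max 1 ((2 * Real.exp C) ^ d) * (R / r) ^ d := by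
                apply mul_le_mul_of_nonneg_left h2 (by positivity)
        · have hsr' : R / r ≤ R / s :=
            div_le_div_of_nonneg_left hR0.le hs0 hsler
          have h1 : (R / s) ^ d ≤ (R / r) ^ d :=
            Real.rpow_le_rpow_of_nonpos hRr_pos hsr' hd.le
          calc (R / s) ^ d ≤ (R / r) ^ d := h1
            _ ≤ max 1 ((2 * Real.exp C) ^ d) * (R / r) ^ d := by
                nth_rewrite 1 [← one_mul ((R / r) ^ d)]
                exact mul_le_mul_of_nonneg_right hmax1 (Real.rpow_pos_of_pos hRr_pos d).le
      calc (μ (ball x R)).toReal ≤ C₂ * (R / s) ^ d * (μ (ball x s)).toReal := hb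
        _ ≤ C₂ * (max 1 ((2 * Real.exp C) ^ d) * (R / r) ^ d) * (μ (ball x r)).toReal := by
            apply mul_le_mul
            · exact mul_le_mul_of_nonneg_left hkey2 hC₂.le
            · exact hmono
            · exact ENNReal.toReal_nonneg
            · positivity
        _ = C₂ * max 1 ((2 * Real.exp C) ^ d) * (R / r) ^ d * (μ (ball x r)).toReal := by
            ring
  · -- easy direction: Assouad bound implies Φ-bound
    rintro ⟨C₁, hC₁, C₂, hC₂, h⟩
    refine ⟨C₁, hC₁, C₂, hC₂, ?_⟩
    intro x hx R r hr hrR hRR hRC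
    exact h x hx R r hr (hrR.trans_le hRR) le_rfl hRC
end

section
/- If p = (p₁,…,p_T) is uniformly distributed on the probability simplex S_T (T ≥ 2), then E(−log min_k p_k) = log T + Σ_{k=1}^{T−1} 1/k. -/
open MeasureTheory Set
open scoped ENNReal NNReal Pointwise

/-- The open probability simplex `S_T = {x : xᵢ > 0, Σ xᵢ = 1}` in `ℝ^T`. -/
def probSimplex (T : ℕ) : Set (EuclideanSpace ℝ (Fin T)) :=
  {x | (∀ i, 0 < x i) ∧ ∑ i, x i = 1}

/-- The uniform probability distribution on the simplex `S_T`: normalized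
`(T-1)`-dimensional Hausdorff measure restricted to `S_T`. -/
noncomputable def simplexUniform (T : ℕ) : Measure (EuclideanSpace ℝ (Fin T)) :=
  (μH[(T:ℝ) - 1] (probSimplex T))⁻¹ • (μH[(T:ℝ) - 1]).restrict (probSimplex T)

section aux

variable {N : ℕ}

lemma min_le'' [NeZero N] (x : Fin N → ℝ) (k : Fin N) : (⨅ j, x j) ≤ x k :=
  ciInf_le (Finite.bddBelow_range x) k

lemma exists_iInf_eq [NeZero N] (x : Fin N → ℝ) : ∃ k, (⨅ j, x j) = x k ∧ ∀ j, x k ≤ x j := by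
  obtain ⟨k, hk⟩ := Finite.exists_min x
  exact ⟨k, le_antisymm (min_le'' x k) (le_ciInf hk), hk⟩

lemma lt_iInf_iff' [NeZero N] (x : Fin N → ℝ) (u : ℝ) : u < (⨅ j, x j) ↔ ∀ j, u < x j := by
  obtain ⟨k, hk, hmin⟩ := exists_iInf_eq x
  exact ⟨fun h j => h.trans_le (min_le'' x j), fun h => hk ▸ h k⟩

lemma iInf_le_iff'' [NeZero N] (x : Fin N → ℝ) (u : ℝ) : (⨅ j, x j) ≤ u ↔ ∃ j, x j ≤ u := by
  obtain ⟨k, hk, hmin⟩ := exists_iInf_eq x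
  exact ⟨fun h => ⟨k, hk ▸ h⟩, fun ⟨j, hj⟩ => (min_le'' x j).trans hj⟩

lemma measurable_eval' (j : Fin N) : Measurable fun x : EuclideanSpace ℝ (Fin N) => x j :=
  (measurable_pi_apply (X := fun _ : Fin N => ℝ) j).comp (WithLp.measurable_ofLp 2 _)

lemma measurable_min' [NeZero N] : Measurable fun x : EuclideanSpace ℝ (Fin N) => ⨅ j, x j := by
  apply measurable_of_Iic
  intro u
  have : (fun x : EuclideanSpace ℝ (Fin N) => ⨅ j, x j) ⁻¹' Iic u
      = ⋃ j, {x : EuclideanSpace ℝ (Fin N) | x j ≤ u} := by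
    ext x; simp [iInf_le_iff'' x u]
  rw [this]
  exact MeasurableSet.iUnion fun j => measurableSet_le (measurable_eval' j) measurable_const

lemma measurableSet_probSimplex' :
    MeasurableSet {x : EuclideanSpace ℝ (Fin N) | (∀ i, 0 < x i) ∧ ∑ i, x i = 1} := by
  apply MeasurableSet.inter
  · show MeasurableSet {x : EuclideanSpace ℝ (Fin N) | ∀ i, 0 < x i}
    have : {x : EuclideanSpace ℝ (Fin N) | ∀ i, 0 < x i}
        = ⋂ i, {x : EuclideanSpace ℝ (Fin N) | 0 < x i} := by ext; simp
    rw [this]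
    exact MeasurableSet.iInter fun i => measurableSet_lt measurable_const (measurable_eval' i)
  · exact measurableSet_eq_fun (Finset.measurable_sum _ fun i _ => measurable_eval' i)
      measurable_const



variable {N : ℕ}

lemma scale_image (hN : 1 ≤ N) {t : ℝ} (ht : 0 ≤ t) (htN : (N:ℝ) * t < 1) :
    {x | x ∈ probSimplex N ∧ ∀ k, t < x k}
      = (fun y : EuclideanSpace ℝ (Fin N) =>
          (show EuclideanSpace ℝ (Fin N) from WithLp.toLp 2 fun _ => t) + (1 - (N:ℝ)*t) • y) '' probSimplex N := by
  set r : ℝ := 1 - (N:ℝ)*t with hr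
  have hrpos : 0 < r := by simp [hr]; linarith
  ext x
  constructor
  · rintro ⟨⟨hxpos, hxsum⟩, hxt⟩
    refine ⟨r⁻¹ • (x - (show EuclideanSpace ℝ (Fin N) from WithLp.toLp 2 fun _ => t)), ⟨fun i => ?_, ?_⟩, ?_⟩
    · have : (r⁻¹ • (x - (show EuclideanSpace ℝ (Fin N) from WithLp.toLp 2 fun _ => t))) i
          = r⁻¹ * (x i - t) := rfl
      rw [this]
      exact mul_pos (inv_pos.2 hrpos) (by linarith [hxt i])
    · have : ∀ i, (r⁻¹ • (x - (show EuclideanSpace ℝ (Fin N) from WithLp.toLp 2 fun _ => t))) i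
          = r⁻¹ * (x i - t) := fun i => rfl
      simp only [this, ← Finset.mul_sum, Finset.sum_sub_distrib, hxsum, Finset.sum_const,
        Finset.card_univ, Fintype.card_fin, nsmul_eq_mul]
      field_simp
      exact hr.symm
    · ext i
      show t + r * (r⁻¹ * (x i - t)) = x i
      field_simp
      ring
  · rintro ⟨y, ⟨hypos, hysum⟩, rfl⟩
    have happ : ∀ i, ((show EuclideanSpace ℝ (Fin N) from WithLp.toLp 2 fun _ => t) + r • y) i
        = t + r * y i := fun i => rfl
    refine ⟨⟨fun i => ?_, ?_⟩, fun i => ?_⟩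
    · show (0:ℝ) < t + r * y i
      nlinarith [hypos i]
    · show ∑ i : Fin N, (t + r * y i) = 1
      simp only [Finset.sum_add_distrib, ← Finset.mul_sum, hysum, Finset.sum_const,
        Finset.card_univ, Fintype.card_fin, nsmul_eq_mul]
      ring
    · show t < t + r * y i
      nlinarith [hypos i]

lemma measure_forall_lt (hN : 1 ≤ N) {t : ℝ} (ht : 0 ≤ t) (htN : (N:ℝ) * t < 1) :
    μH[(N:ℝ)-1] {x | x ∈ probSimplex N ∧ ∀ k, t < x k}
      = ENNReal.ofReal ((1 - (N:ℝ)*t)^(N-1)) * μH[(N:ℝ)-1] (probSimplex N) := by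
  set r : ℝ := 1 - (N:ℝ)*t with hr
  have hrpos : 0 < r := by simp [hr]; linarith
  have hd : (0:ℝ) ≤ (N:ℝ) - 1 := by
    have : (1:ℝ) ≤ (N:ℝ) := by exact_mod_cast hN
    linarith
  rw [scale_image hN ht htN, ← hr]
  have himg : (fun y : EuclideanSpace ℝ (Fin N) =>
        (show EuclideanSpace ℝ (Fin N) from WithLp.toLp 2 fun _ => t) + r • y) '' probSimplex N
      = (show EuclideanSpace ℝ (Fin N) from WithLp.toLp 2 fun _ => t) +ᵥ (r • probSimplex N) := by
    rw [← Set.image_smul, ← Set.image_vadd, Set.image_image]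
    rfl
  rw [himg, hausdorffMeasure_vadd _ (Or.inl hd),
    Measure.hausdorffMeasure_smul₀ hd (ne_of_gt hrpos) (probSimplex N)]
  rw [ENNReal.smul_def, smul_eq_mul]
  congr 1
  have h1 : ‖r‖₊ = r.toNNReal := by
    rw [Real.nnnorm_of_nonneg hrpos.le]
    ext
    simp [Real.toNNReal, hrpos.le]
  have h2 : ((N:ℝ) - 1) = ((N - 1 : ℕ) : ℝ) := by
    have : (1:ℝ) ≤ (N:ℝ) := by exact_mod_cast hN
    push_cast [Nat.cast_sub hN]
    ring
  rw [h1, h2, NNReal.rpow_natCast]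
  rw [ENNReal.ofReal_pow hrpos.le, ENNReal.coe_pow]
  rfl



variable {n : ℕ}

/-- lower simplex in `ℝ^n` -/
def lowSimplex (n : ℕ) : Set (Fin n → ℝ) := {y | (∀ i, 0 < y i) ∧ ∑ i, y i < 1}

noncomputable def Lmap (n : ℕ) : (Fin n → ℝ) →L[ℝ] EuclideanSpace ℝ (Fin (n+1)) :=
  ((EuclideanSpace.equiv (Fin (n+1)) ℝ).symm : (Fin (n+1) → ℝ) →L[ℝ] EuclideanSpace ℝ (Fin (n+1))).comp
    (ContinuousLinearMap.pi
      (Fin.lastCases (-(∑ j : Fin n, ContinuousLinearMap.proj j))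
        (fun j => ContinuousLinearMap.proj j)))

noncomputable def Fmap (n : ℕ) : (Fin n → ℝ) → EuclideanSpace ℝ (Fin (n+1)) :=
  fun y => (EuclideanSpace.equiv (Fin (n+1)) ℝ).symm (Fin.snoc 0 1) + Lmap n y

lemma Fmap_apply_castSucc (y : Fin n → ℝ) (j : Fin n) : Fmap n y j.castSucc = y j := by
  simp only [Fmap, Lmap, ContinuousLinearMap.coe_comp', Function.comp_apply,
    ContinuousLinearEquiv.coe_coe, PiLp.add_apply, PiLp.toLp_apply,
    ContinuousLinearMap.pi_apply, Fin.snoc_castSucc, Fin.lastCases_castSucc,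
    ContinuousLinearMap.proj_apply, Pi.zero_apply]
  simp

lemma Fmap_apply_last (y : Fin n → ℝ) : Fmap n y (Fin.last n) = 1 - ∑ j, y j := by
  simp only [Fmap, Lmap, ContinuousLinearMap.coe_comp', Function.comp_apply,
    ContinuousLinearEquiv.coe_coe, PiLp.add_apply, PiLp.toLp_apply,
    ContinuousLinearMap.pi_apply, Fin.snoc_last, Fin.lastCases_last]
  simp [sub_eq_add_neg]

lemma Fmap_lipschitz (n : ℕ) : LipschitzWith ‖Lmap n‖₊ (Fmap n) := by
  apply LipschitzWith.of_dist_le_mul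
  intro x y
  show dist (_ + Lmap n x) (_ + Lmap n y) ≤ _
  rw [dist_add_left]
  exact (Lmap n).lipschitz.dist_le_mul x y

noncomputable def Pmap (n : ℕ) : EuclideanSpace ℝ (Fin (n+1)) →L[ℝ] (Fin n → ℝ) :=
  (ContinuousLinearMap.pi (fun j : Fin n => ContinuousLinearMap.proj j.castSucc)).comp
    ((EuclideanSpace.equiv (Fin (n+1)) ℝ) : EuclideanSpace ℝ (Fin (n+1)) →L[ℝ] (Fin (n+1) → ℝ))

lemma Pmap_apply (x : EuclideanSpace ℝ (Fin (n+1))) (j : Fin n) : Pmap n x j = x j.castSucc := rfl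

lemma Pmap_Fmap (y : Fin n → ℝ) : Pmap n (Fmap n y) = y := by
  funext j; rw [Pmap_apply, Fmap_apply_castSucc]

lemma probSimplex_eq_image : probSimplex (n+1) = Fmap n '' lowSimplex n := by
  ext x
  constructor
  · rintro ⟨hpos, hsum⟩
    rw [Fin.sum_univ_castSucc] at hsum
    refine ⟨fun j => x j.castSucc, ⟨fun i => hpos _, by nlinarith [hpos (Fin.last n)]⟩, ?_⟩
    ext i
    refine Fin.lastCases ?_ (fun j => ?_) i
    · rw [Fmap_apply_last]; linarith
    · rw [Fmap_apply_castSucc]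
  · rintro ⟨y, ⟨hypos, hysum⟩, rfl⟩
    constructor
    · intro i
      refine Fin.lastCases ?_ (fun j => ?_) i
      · rw [Fmap_apply_last]; linarith
      · rw [Fmap_apply_castSucc]; exact hypos j
    · rw [Fin.sum_univ_castSucc, Fmap_apply_last]
      simp only [Fmap_apply_castSucc]
      ring

lemma lowSimplex_eq_image : lowSimplex n = Pmap n '' probSimplex (n+1) := by
  rw [probSimplex_eq_image, Set.image_image]
  simp only [Pmap_Fmap, Set.image_id']

lemma isOpen_lowSimplex : IsOpen (lowSimplex n) := by
  have h1 : IsOpen {y : Fin n → ℝ | ∀ i, 0 < y i} := by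
    rw [show {y : Fin n → ℝ | ∀ i, 0 < y i} = ⋂ i, {y : Fin n → ℝ | 0 < y i} by ext; simp]
    exact isOpen_iInter_of_finite fun i => isOpen_lt continuous_const (continuous_apply i)
  have h2 : IsOpen {y : Fin n → ℝ | ∑ i, y i < 1} :=
    isOpen_lt (by continuity) continuous_const
  exact h1.inter h2

lemma lowSimplex_nonempty : (lowSimplex n).Nonempty := by
  refine ⟨fun _ => 1/(n+1), fun i => by positivity, ?_⟩
  have h : ∑ _i : Fin n, (1/((n:ℝ)+1)) = n/(n+1) := by
    rw [Finset.sum_const, Finset.card_univ, Fintype.card_fin, nsmul_eq_mul]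
    ring
  rw [h, div_lt_one (by positivity)]
  linarith

lemma volume_lowSimplex_pos : 0 < volume (lowSimplex n) :=
  isOpen_lowSimplex.measure_pos volume lowSimplex_nonempty

lemma volume_lowSimplex_lt_top : volume (lowSimplex n) < ⊤ := by
  have hsub : lowSimplex n ⊆ Set.pi Set.univ (fun _ : Fin n => Ioo (0:ℝ) 1) := by
    rintro y ⟨hypos, hysum⟩ i _
    refine ⟨hypos i, ?_⟩
    have : ∑ j, y j ≥ y i := Finset.single_le_sum (fun j _ => (hypos j).le) (Finset.mem_univ i)
    linarith
  calc volume (lowSimplex n) ≤ volume (Set.pi Set.univ (fun _ : Fin n => Ioo (0:ℝ) 1)) :=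
        measure_mono hsub
    _ = ∏ _i : Fin n, volume (Ioo (0:ℝ) 1) := volume_pi_pi _
    _ < ⊤ := by simp [Real.volume_Ioo]

lemma hausdorff_eq_volume_pi :
    (μH[(n:ℝ)] : Measure (Fin n → ℝ)) = volume := by
  have := hausdorffMeasure_pi_real (ι := Fin n)
  simpa using this

lemma measure_probSimplex_lt_top : μH[(n:ℝ)] (probSimplex (n+1)) < ⊤ := by
  rw [probSimplex_eq_image]
  calc μH[(n:ℝ)] (Fmap n '' lowSimplex n)
      ≤ (‖Lmap n‖₊ : ℝ≥0∞) ^ (n:ℝ) * μH[(n:ℝ)] (lowSimplex n) :=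
        (Fmap_lipschitz n).hausdorffMeasure_image_le (by positivity) _
    _ < ⊤ := by
        rw [hausdorff_eq_volume_pi]
        exact ENNReal.mul_lt_top
          (ENNReal.rpow_lt_top_of_nonneg (by positivity) ENNReal.coe_ne_top)
          volume_lowSimplex_lt_top

lemma measure_probSimplex_pos : 0 < μH[(n:ℝ)] (probSimplex (n+1)) := by
  rcases eq_zero_or_pos (μH[(n:ℝ)] (probSimplex (n+1))) with h | h
  · exfalso
    have h1 : volume (lowSimplex n) ≤ (‖Pmap n‖₊ : ℝ≥0∞) ^ (n:ℝ) * μH[(n:ℝ)] (probSimplex (n+1)) := by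
      rw [← hausdorff_eq_volume_pi, lowSimplex_eq_image]
      exact (Pmap n).lipschitz.hausdorffMeasure_image_le (by positivity) _
    rw [h, mul_zero] at h1
    exact absurd (le_antisymm h1 zero_le) (ne_of_gt volume_lowSimplex_pos)
  · exact h


variable {n N : ℕ}

lemma cast_index_eq : ((n+1:ℕ):ℝ) - 1 = (n:ℝ) := by push_cast; ring

lemma measurableSet_probSimplex : MeasurableSet (probSimplex N) := measurableSet_probSimplex'

lemma min_le_inv_card (x : EuclideanSpace ℝ (Fin (n+1))) (hx : x ∈ probSimplex (n+1)) {u : ℝ}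
    (hu : 1 ≤ ((n:ℝ)+1) * u) : (⨅ j, x j) ≤ u := by
  rw [iInf_le_iff'']
  by_contra h
  push_neg at h
  have hsum : ∑ j : Fin (n+1), u < ∑ j, x j := Finset.sum_lt_sum_of_nonempty ⟨0, Finset.mem_univ 0⟩
    (fun j _ => h j)
  rw [hx.2, Finset.sum_const, Finset.card_univ, Fintype.card_fin, nsmul_eq_mul] at hsum
  push_cast at hsum
  nlinarith

lemma restrict_min_le (hn : 1 ≤ n) {u : ℝ} (hu0 : 0 < u) (hu1 : u < 1) :
    (μH[(n:ℝ)]).restrict (probSimplex (n+1)) {x | (⨅ k, x k) ≤ u}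
      = μH[(n:ℝ)] (probSimplex (n+1))
        * ENNReal.ofReal (1 - (max (1 - ((n:ℝ)+1)*u) 0)^n) := by
  have hmeas : MeasurableSet {x : EuclideanSpace ℝ (Fin (n+1)) | (⨅ k, x k) ≤ u} :=
    measurableSet_le measurable_min' measurable_const
  rw [Measure.restrict_apply hmeas]
  rcases le_or_gt 1 (((n:ℝ)+1) * u) with hc | hc
  · have hmax : max (1 - ((n:ℝ)+1)*u) 0 = 0 := max_eq_right (by linarith)
    have hset : {x : EuclideanSpace ℝ (Fin (n+1)) | (⨅ k, x k) ≤ u} ∩ probSimplex (n+1)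
        = probSimplex (n+1) := by
      apply Set.inter_eq_right.mpr
      intro x hx
      exact min_le_inv_card x hx hc
    rw [hset, hmax, zero_pow (by omega), sub_zero, ENNReal.ofReal_one, mul_one]
  · -- u < 1/(n+1)
    have hmax : max (1 - ((n:ℝ)+1)*u) 0 = 1 - ((n:ℝ)+1)*u := max_eq_left (by linarith)
    have hB : MeasurableSet {x | x ∈ probSimplex (n+1) ∧ ∀ k, u < x k} := by
      have heq : {x | x ∈ probSimplex (n+1) ∧ ∀ k, u < x k}
          = probSimplex (n+1) ∩ {x : EuclideanSpace ℝ (Fin (n+1)) | u < ⨅ k, x k} := by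
        ext x
        simp only [Set.mem_inter_iff, Set.mem_setOf_eq]
        rw [lt_iInf_iff' (fun j => x j) u]
      rw [heq]
      exact measurableSet_probSimplex.inter (measurableSet_lt measurable_const measurable_min')
    have hsplit : {x : EuclideanSpace ℝ (Fin (n+1)) | (⨅ k, x k) ≤ u} ∩ probSimplex (n+1)
        = probSimplex (n+1) \ {x | x ∈ probSimplex (n+1) ∧ ∀ k, u < x k} := by
      ext x
      simp only [Set.mem_inter_iff, Set.mem_setOf_eq, Set.mem_diff, not_and]
      constructor
      · rintro ⟨h1, h2⟩
        refine ⟨h2, fun _ hall => ?_⟩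
        have := (lt_iInf_iff' (fun j => x j) u).mpr hall
        exact absurd h1 (not_le.mpr this)
      · rintro ⟨h1, h2⟩
        refine ⟨?_, h1⟩
        by_contra h3
        push_neg at h3
        exact h2 h1 fun k => lt_of_lt_of_le h3 (min_le'' (fun j => x j) k)
    rw [hsplit]
    have hBval : μH[(n:ℝ)] {x | x ∈ probSimplex (n+1) ∧ ∀ k, u < x k}
        = ENNReal.ofReal ((1 - ((n:ℝ)+1)*u)^n) * μH[(n:ℝ)] (probSimplex (n+1)) := by
      have := measure_forall_lt (N := n+1) (by omega) hu0.le (by push_cast; linarith)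
      rw [cast_index_eq] at this
      simpa using this
    have hMne : μH[(n:ℝ)] (probSimplex (n+1)) ≠ ⊤ := measure_probSimplex_lt_top.ne
    have hBne : μH[(n:ℝ)] {x | x ∈ probSimplex (n+1) ∧ ∀ k, u < x k} ≠ ⊤ := by
      rw [hBval]
      exact ENNReal.mul_ne_top ENNReal.ofReal_ne_top hMne
    rw [measure_diff (fun x hx => hx.1) hB.nullMeasurableSet hBne]
    have ha0 : (0:ℝ) ≤ (1 - ((n:ℝ)+1)*u)^n := pow_nonneg (by linarith) n
    rw [hBval, hmax, ENNReal.ofReal_sub _ ha0, ENNReal.ofReal_one,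
      ENNReal.mul_sub (fun _ _ => hMne), mul_one, mul_comm (ENNReal.ofReal _)]


lemma lint_aux {a : ℝ} (ha : 0 < a) (ha1 : a < 1) :
    ∫⁻ u in Ioo (0:ℝ) 1, (if a ≤ u then ENNReal.ofReal u⁻¹ else 0)
      = ENNReal.ofReal (-Real.log a) := by
  have h1 : ∀ u : ℝ, (if a ≤ u then ENNReal.ofReal u⁻¹ else 0)
      = (Ici a).indicator (fun u => ENNReal.ofReal u⁻¹) u := by
    intro u; simp [Set.indicator_apply]
  simp_rw [h1]
  rw [lintegral_indicator measurableSet_Ici, Measure.restrict_restrict measurableSet_Ici]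
  have h2 : Ici a ∩ Ioo 0 1 = Ico a 1 := by
    ext u; simp only [mem_inter_iff, mem_Ici, mem_Ioo, mem_Ico]
    constructor
    · rintro ⟨h, _, h2⟩; exact ⟨h, h2⟩
    · rintro ⟨h, h2⟩; exact ⟨h, lt_of_lt_of_le ha h, h2⟩
  rw [h2, Measure.restrict_congr_set Ioo_ae_eq_Ico.symm]
  have hcont : ContinuousOn (fun u : ℝ => u⁻¹) (Icc a 1) :=
    ContinuousOn.inv₀ continuousOn_id fun x hx => ne_of_gt (lt_of_lt_of_le ha hx.1)
  have hint : IntegrableOn (fun u : ℝ => u⁻¹) (Ioo a 1) :=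
    (hcont.integrableOn_compact isCompact_Icc).mono_set Ioo_subset_Icc_self
  rw [← ofReal_integral_eq_lintegral_ofReal hint]
  · congr 1
    rw [← integral_Ioc_eq_integral_Ioo, ← intervalIntegral.integral_of_le ha1.le,
      integral_inv_of_pos ha one_pos, one_div, Real.log_inv]
  · filter_upwards [ae_restrict_mem measurableSet_Ioo] with u hu
    exact inv_nonneg.2 (le_of_lt (lt_trans ha hu.1))

noncomputable def gfun (n : ℕ) (u : ℝ) : ℝ := u⁻¹ * (1 - (max (1 - ((n:ℝ)+1)*u) 0)^n)

lemma gfun_nonneg {n : ℕ} {u : ℝ} (hu : 0 < u) : 0 ≤ gfun n u := by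
  have h0 : (0:ℝ) ≤ max (1 - ((n:ℝ)+1)*u) 0 := le_max_right _ _
  have h1 : max (1 - ((n:ℝ)+1)*u) 0 ≤ 1 := by
    apply max_le _ zero_le_one
    nlinarith
  have h2 := pow_le_one₀ h0 h1 (n := n)
  have h3 : 0 ≤ 1 - (max (1 - ((n:ℝ)+1)*u) 0)^n := by linarith
  have h4 : (0:ℝ) ≤ u⁻¹ := inv_nonneg.2 hu.le
  exact mul_nonneg h4 h3

lemma gfun_le {n : ℕ} {u : ℝ} (hu : 0 < u) (hu1 : u ≤ 1) :
    gfun n u ≤ (((n:ℝ)+1))*(((n:ℝ))+1) := by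
  rcases le_or_gt 1 (((n:ℝ)+1)*u) with hc | hc
  · have hmax : max (1 - ((n:ℝ)+1)*u) 0 = 0 := max_eq_right (by linarith)
    have : gfun n u = u⁻¹ * (1 - 0^n) := by rw [gfun, hmax]
    rcases Nat.eq_zero_or_pos n with rfl | hn
    · simp only [gfun, Nat.cast_zero, pow_zero]
      simp only [Nat.cast_zero] at hc
      nlinarith [inv_pos.2 hu]
    · rw [this, zero_pow (by omega), sub_zero, mul_one]
      have hpos : (0:ℝ) < (n:ℝ)+1 := by positivity
      have h9 : ((n:ℝ)+1)⁻¹ ≤ u := by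
        have := mul_le_mul_of_nonneg_left hc (inv_pos.2 hpos).le
        rw [mul_one, ← mul_assoc, inv_mul_cancel₀ hpos.ne', one_mul] at this
        exact this
      have hinv : u⁻¹ ≤ (n:ℝ)+1 := by
        have := inv_anti₀ (inv_pos.2 hpos) h9
        rwa [inv_inv] at this
      nlinarith [hinv]
  · have hmax : max (1 - ((n:ℝ)+1)*u) 0 = 1 - ((n:ℝ)+1)*u := max_eq_left (by linarith)
    set b := 1 - ((n:ℝ)+1)*u with hb
    have hbn : 1 + (n:ℝ)*(b-1) ≤ b^n := by
      have := one_add_mul_le_pow (a := b - 1) (by nlinarith) n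
      simpa using this
    have h2 : 1 - b^n ≤ (n:ℝ)*((n:ℝ)+1)*u := by nlinarith
    have h3 : gfun n u = u⁻¹ * (1 - b^n) := by rw [gfun, hmax]
    have h4 : u⁻¹ * (1 - b^n) ≤ u⁻¹ * ((n:ℝ)*((n:ℝ)+1)*u) := by
      apply mul_le_mul_of_nonneg_left h2 (inv_nonneg.2 hu.le)
    have h5 : u⁻¹ * ((n:ℝ)*((n:ℝ)+1)*u) = (n:ℝ)*((n:ℝ)+1) := by
      field_simp
    rw [h3]
    calc u⁻¹ * (1 - b^n) ≤ (n:ℝ)*((n:ℝ)+1) := by rw [← h5]; exact h4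
      _ ≤ ((n:ℝ)+1)*((n:ℝ)+1) := by nlinarith [Nat.cast_nonneg (α := ℝ) n]

lemma gfun_measurable (n : ℕ) : Measurable (gfun n) := by
  have hcont2 : Continuous fun u : ℝ => 1 - (max (1 - ((n:ℝ)+1)*u) 0)^n := by
    apply continuous_const.sub
    exact (((continuous_const.sub (continuous_const.mul continuous_id)).max continuous_const).pow n)
  exact measurable_inv.mul hcont2.measurable

lemma gfun_integrableOn (n : ℕ) : IntegrableOn (gfun n) (Ioc (0:ℝ) 1) := by
  apply Integrable.mono' (integrable_const (((n:ℝ)+1)*((n:ℝ)+1)))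
    (gfun_measurable n).aestronglyMeasurable
  filter_upwards [ae_restrict_mem measurableSet_Ioc] with u hu
  rw [Real.norm_eq_abs, abs_of_nonneg (gfun_nonneg hu.1)]
  exact gfun_le hu.1 hu.2

lemma integral_gfun {n : ℕ} (hn : 1 ≤ n) :
    ∫ u in Ioo (0:ℝ) 1, gfun n u
      = Real.log ((n:ℝ)+1) + ∑ k ∈ Finset.range n, (1:ℝ)/((k:ℝ)+1) := by
  have hN : (0:ℝ) < (n:ℝ)+1 := by positivity
  set c : ℝ := ((n:ℝ)+1)⁻¹ with hc
  have hc0 : 0 < c := inv_pos.2 hN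
  have hc1 : c ≤ 1 := by
    rw [hc, inv_le_one_iff₀]; right; linarith [Nat.one_le_cast (α := ℝ) |>.2 hn]
  have hcN : ((n:ℝ)+1) * c = 1 := mul_inv_cancel₀ hN.ne'
  rw [← integral_Ioc_eq_integral_Ioo, ← intervalIntegral.integral_of_le zero_le_one]
  have h01 : IntervalIntegrable (gfun n) volume 0 c := by
    rw [intervalIntegrable_iff_integrableOn_Ioc_of_le hc0.le]
    exact (gfun_integrableOn n).mono_set (Ioc_subset_Ioc le_rfl hc1)
  have hc1' : IntervalIntegrable (gfun n) volume c 1 := by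
    rw [intervalIntegrable_iff_integrableOn_Ioc_of_le hc1]
    exact (gfun_integrableOn n).mono_set (Ioc_subset_Ioc hc0.le le_rfl)
  rw [← intervalIntegral.integral_add_adjacent_intervals h01 hc1']
  have hsecond : ∫ u in c..1, gfun n u = Real.log ((n:ℝ)+1) := by
    have heq : EqOn (gfun n) (fun u => u⁻¹) (uIcc c 1) := by
      intro u hu
      rw [uIcc_of_le hc1] at hu
      have hu0 : 0 < u := lt_of_lt_of_le hc0 hu.1
      have : ((n:ℝ)+1) * u ≥ 1 := by
        calc (1:ℝ) = ((n:ℝ)+1)*c := hcN.symm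
          _ ≤ ((n:ℝ)+1)*u := by nlinarith [hu.1]
      have hmax : max (1 - ((n:ℝ)+1)*u) 0 = 0 := max_eq_right (by linarith)
      show gfun n u = u⁻¹
      rw [gfun, hmax, zero_pow (by omega), sub_zero, mul_one]
    rw [intervalIntegral.integral_congr heq, integral_inv_of_pos hc0 one_pos]
    rw [hc, one_div, inv_inv]
  have hfirst : ∫ u in (0)..c, gfun n u = ∑ k ∈ Finset.range n, (1:ℝ)/((k:ℝ)+1) := by
    have heq : EqOn (gfun n)
        (fun u => ((n:ℝ)+1) * ∑ k ∈ Finset.range n, (1-((n:ℝ)+1)*u)^k) (Ioc 0 c) := by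
      intro u hu
      have hu0 : 0 < u := hu.1
      have hle : ((n:ℝ)+1) * u ≤ 1 := by
        calc ((n:ℝ)+1)*u ≤ ((n:ℝ)+1)*c := by nlinarith [hu.2]
          _ = 1 := hcN
      have hmax : max (1 - ((n:ℝ)+1)*u) 0 = 1 - ((n:ℝ)+1)*u := max_eq_left (by linarith)
      show gfun n u = _
      rw [gfun, hmax]
      have hu' : u ≠ 0 := hu0.ne'
      have hgeom : 1 - (1-((n:ℝ)+1)*u)^n
          = (((n:ℝ)+1)*u) * ∑ k ∈ Finset.range n, (1-((n:ℝ)+1)*u)^k := by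
        obtain ⟨x, hx⟩ : ∃ y : ℝ, y = 1-((n:ℝ)+1)*u := ⟨_, rfl⟩
        rw [← hx, show ((n:ℝ)+1)*u = 1 - x by rw [hx]; ring]
        linear_combination geom_sum_mul x n
      rw [hgeom]
      field_simp
    rw [intervalIntegral.integral_of_le hc0.le,
      setIntegral_congr_fun measurableSet_Ioc heq,
      ← intervalIntegral.integral_of_le hc0.le]
    rw [intervalIntegral.integral_const_mul,
      intervalIntegral.integral_finset_sum (f := fun k (u:ℝ) => (1-((n:ℝ)+1)*u)^k)
        (fun k _ => ((by fun_prop : Continuous fun u : ℝ => (1-((n:ℝ)+1)*u)^k)).intervalIntegrable 0 c)]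
    have hpiece : ∀ k ∈ Finset.range n,
        (∫ u in (0:ℝ)..(c:ℝ), (1-((n:ℝ)+1)*u)^k) = (((n:ℝ)+1))⁻¹ * (1/((k:ℝ)+1)) := by
      intro k _
      have := intervalIntegral.integral_comp_mul_left (a := (0:ℝ)) (b := c)
        (fun v => (1-v)^k) hN.ne'
      rw [this, mul_zero, hcN]
      have h2 := intervalIntegral.integral_comp_sub_left (a := (0:ℝ)) (b := 1)
        (fun w => w^k) 1
      rw [h2]
      norm_num [integral_pow]
    rw [Finset.sum_congr rfl hpiece, Finset.mul_sum]
    apply Finset.sum_congr rfl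
    intro k _
    field_simp
  rw [hfirst, hsecond]
  ring





lemma sum_inv_Icc (n : ℕ) :
    ∑ k ∈ Finset.Icc 1 n, (1:ℝ)/(k:ℝ) = ∑ k ∈ Finset.range n, (1:ℝ)/((k:ℝ)+1) := by
  induction n with
  | zero => simp
  | succ m ih =>
    rw [Finset.sum_Icc_succ_top (by omega), ih, Finset.sum_range_succ]
    push_cast
    ring

end aux

/-- If `p` is uniformly distributed on the simplex `S_T` (`T ≥ 2`), then
`E(−log min_k p_k) = log T + Σ_{k=1}^{T−1} 1/k`. -/
theorem simplexUniform_expect_neg_log_min (T : ℕ) (hT : 2 ≤ T) :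
    ∫ x, (-Real.log (⨅ k, x k)) ∂(simplexUniform T) =
      Real.log T + ∑ k ∈ Finset.Icc 1 (T - 1), (1 : ℝ) / k := by
  obtain ⟨n, rfl⟩ : ∃ n, T = n + 1 := ⟨T - 1, by omega⟩
  have hn : 1 ≤ n := by omega
  have hNpos : (0:ℝ) < (n:ℝ) + 1 := by positivity
  have hidx : (μH[((n+1:ℕ):ℝ) - 1] : Measure (EuclideanSpace ℝ (Fin (n+1))))
      = μH[(n:ℝ)] := by rw [cast_index_eq]
  have hMne : μH[(n:ℝ)] (probSimplex (n+1)) ≠ ⊤ := measure_probSimplex_lt_top.ne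
  have hM0 : μH[(n:ℝ)] (probSimplex (n+1)) ≠ 0 := measure_probSimplex_pos.ne'
  set M := μH[(n:ℝ)] (probSimplex (n+1)) with hM
  set μ := (μH[(n:ℝ)]).restrict (probSimplex (n+1)) with hμ
  haveI hfin : IsFiniteMeasure μ := by
    constructor
    rw [hμ, Measure.restrict_apply_univ]
    exact measure_probSimplex_lt_top
  set A : ℝ := Real.log ((n:ℝ)+1) + ∑ k ∈ Finset.range n, (1:ℝ)/((k:ℝ)+1) with hA
  have hA0 : 0 ≤ A := by
    rw [hA]
    have h1 : 0 ≤ Real.log ((n:ℝ)+1) := Real.log_nonneg (by linarith)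
    have h2 : 0 ≤ ∑ k ∈ Finset.range n, (1:ℝ)/((k:ℝ)+1) :=
      Finset.sum_nonneg fun k _ => by positivity
    linarith
  have hinvlt : ((n:ℝ)+1)⁻¹ < 1 := by
    rw [inv_lt_one_iff₀]
    right
    have : (1:ℝ) ≤ (n:ℝ) := by exact_mod_cast hn
    linarith
  -- key lintegral identity
  have hkey : ∫⁻ x, ENNReal.ofReal (-Real.log (⨅ k, x k)) ∂μ = M * ENNReal.ofReal A := by
    have h1 : ∫⁻ x, ENNReal.ofReal (-Real.log (⨅ k, x k)) ∂μ
        = ∫⁻ x, (∫⁻ u in Ioo (0:ℝ) 1,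
            (if (⨅ k, x k) ≤ u then ENNReal.ofReal u⁻¹ else 0)) ∂μ := by
      apply lintegral_congr_ae
      filter_upwards [ae_restrict_mem measurableSet_probSimplex] with x hx
      have hmpos : 0 < ⨅ k, x k := by
        obtain ⟨k, hk, -⟩ := exists_iInf_eq (fun j => x j)
        rw [hk]; exact hx.1 k
      have hmlt : (⨅ k, x k) < 1 := by
        have h2 := min_le_inv_card x hx (u := ((n:ℝ)+1)⁻¹)
          (by rw [mul_inv_cancel₀ hNpos.ne'])
        linarith
      exact (lint_aux hmpos hmlt).symm
    rw [h1]
    have hum : Measurable (fun p : (EuclideanSpace ℝ (Fin (n+1))) × ℝ =>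
          (if (⨅ k, p.1 k) ≤ p.2 then ENNReal.ofReal p.2⁻¹ else 0)) := by
      apply Measurable.ite
      · exact measurableSet_le (measurable_min'.comp measurable_fst) measurable_snd
      · exact ENNReal.measurable_ofReal.comp measurable_snd.inv
      · exact measurable_const
    rw [lintegral_lintegral_swap (hum.aemeasurable :
      AEMeasurable (Function.uncurry fun (x : EuclideanSpace ℝ (Fin (n+1))) (u : ℝ) =>
        (if (⨅ k, x k) ≤ u then ENNReal.ofReal u⁻¹ else 0)) _)]
    have h2 : ∀ᵐ u ∂(volume : Measure ℝ), u ∈ Ioo (0:ℝ) 1 →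
        (∫⁻ x, (if (⨅ k, x k) ≤ u then ENNReal.ofReal u⁻¹ else 0) ∂μ)
          = M * ENNReal.ofReal (gfun n u) := by
      refine ae_of_all _ fun u hu => ?_
      have hind : (fun x : EuclideanSpace ℝ (Fin (n+1)) =>
          (if (⨅ k, x k) ≤ u then ENNReal.ofReal u⁻¹ else 0))
          = Set.indicator {x : EuclideanSpace ℝ (Fin (n+1)) | (⨅ k, x k) ≤ u}
              (fun _ => ENNReal.ofReal u⁻¹) := by
        funext x
        simp [Set.indicator_apply]
      rw [hind, lintegral_indicator_const
        (measurableSet_le measurable_min' measurable_const)]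
      rw [hμ, restrict_min_le hn hu.1 hu.2]
      rw [gfun, ENNReal.ofReal_mul (inv_nonneg.2 hu.1.le)]
      ring
    rw [setLIntegral_congr_fun_ae measurableSet_Ioo h2]
    rw [lintegral_const_mul' M _ hMne]
    congr 1
    have hnn : 0 ≤ᵐ[volume.restrict (Ioo (0:ℝ) 1)] gfun n := by
      filter_upwards [ae_restrict_mem measurableSet_Ioo] with u hu
      exact gfun_nonneg hu.1
    rw [← ofReal_integral_eq_lintegral_ofReal
      ((gfun_integrableOn n).mono_set Ioo_subset_Ioc_self) hnn]
    rw [integral_gfun hn]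
  -- assemble
  have hmeas : AEStronglyMeasurable (fun x : EuclideanSpace ℝ (Fin (n+1)) =>
      -Real.log (⨅ k, x k)) μ :=
    ((Real.measurable_log.comp measurable_min').neg).aestronglyMeasurable
  have hnn : 0 ≤ᵐ[μ] fun x : EuclideanSpace ℝ (Fin (n+1)) => -Real.log (⨅ k, x k) := by
    filter_upwards [ae_restrict_mem measurableSet_probSimplex] with x hx
    have hmpos : 0 < ⨅ k, x k := by
      obtain ⟨k, hk, -⟩ := exists_iInf_eq (fun j => x j)
      rw [hk]; exact hx.1 k
    have hle1 : (⨅ k, x k) ≤ 1 := by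
      have h2 := min_le_inv_card x hx (u := ((n:ℝ)+1)⁻¹)
        (by rw [mul_inv_cancel₀ hNpos.ne'])
      linarith
    simpa using Real.log_nonpos hmpos.le hle1
  have hint : ∫ x, (-Real.log (⨅ k, x k)) ∂μ = M.toReal * A := by
    rw [integral_eq_lintegral_of_nonneg_ae hnn hmeas, hkey,
      ENNReal.toReal_mul, ENNReal.toReal_ofReal hA0]
  show ∫ x, (-Real.log (⨅ k, x k)) ∂(simplexUniform (n+1)) = _
  rw [simplexUniform, hidx]
  rw [← hM, ← hμ, integral_smul_measure, hint, smul_eq_mul, ENNReal.toReal_inv,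
    ← mul_assoc, inv_mul_cancel₀ (ENNReal.toReal_ne_zero.2 ⟨hM0, hMne⟩), one_mul]
  rw [hA]
  have hTm : n + 1 - 1 = n := rfl
  rw [hTm, sum_inv_Icc]
  push_cast
  ring
end

section
/- For every integer n ≥ 0, Σ_{k=0}^{n} (−1)^k C(n,k)/(k+1)² = (1/(n+1)) · Σ_{k=0}^{n} 1/(k+1). -/
open Finset

private lemma alt_choose_succ_sum (m : ℕ) :
    ∑ k ∈ range (m + 1), (-1 : ℝ) ^ k * ((m + 1).choose (k + 1)) = 1 := by
  have h0 : ∑ j ∈ range (m + 2), (-1 : ℝ) ^ j * ((m + 1).choose j) = 0 := by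
    have := Int.alternating_sum_range_choose (n := m + 1)
    rw [if_neg (Nat.succ_ne_zero m)] at this
    exact_mod_cast this
  rw [Finset.sum_range_succ' (fun j => (-1 : ℝ) ^ j * ((m + 1).choose j)) (m + 1)] at h0
  have : ∑ k ∈ range (m + 1), (-1 : ℝ) ^ (k + 1) * ((m + 1).choose (k + 1)) =
      - ∑ k ∈ range (m + 1), (-1 : ℝ) ^ k * ((m + 1).choose (k + 1)) := by
    rw [← Finset.sum_neg_distrib]
    exact Finset.sum_congr rfl fun k _ => by ring
  rw [this] at h0
  simp at h0
  linarith

private lemma alt_choose_div_succ (n : ℕ) :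
    ∑ k ∈ range (n + 1), (-1 : ℝ) ^ k * (n.choose k) / (k + 1) = 1 / (n + 1) := by
  have key : ∀ k : ℕ, (-1 : ℝ) ^ k * (n.choose k) / (k + 1) =
      (-1 : ℝ) ^ k * ((n + 1).choose (k + 1)) / (n + 1) := by
    intro k
    have h := Nat.add_one_mul_choose_eq n k
    have h' : ((n : ℝ) + 1) * (n.choose k) = ((n + 1).choose (k + 1)) * ((k : ℝ) + 1) := by
      exact_mod_cast h
    rw [div_eq_div_iff (by positivity) (by positivity)]
    calc (-1 : ℝ) ^ k * (n.choose k) * ((n : ℝ) + 1)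
        = (-1 : ℝ) ^ k * (((n : ℝ) + 1) * (n.choose k)) := by ring
      _ = (-1 : ℝ) ^ k * (((n + 1).choose (k + 1)) * ((k : ℝ) + 1)) := by rw [h']
      _ = (-1 : ℝ) ^ k * ((n + 1).choose (k + 1)) * ((k : ℝ) + 1) := by ring
  simp_rw [key]
  rw [← Finset.sum_div, alt_choose_succ_sum]

private lemma alt_harmonic (m : ℕ) :
    ∑ j ∈ range (m + 1), (-1 : ℝ) ^ (j + 1) * (m.choose j) / j =
      ∑ k ∈ range m, (1 : ℝ) / (k + 1) := by
  induction m with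
  | zero => simp
  | succ m ih =>
    rw [Finset.sum_range_succ' (fun j => (-1 : ℝ) ^ (j + 1) * ((m + 1).choose j) / j) (m + 1)]
    simp only [Nat.cast_zero, div_zero, add_zero]
    have split : ∀ i : ℕ, (-1 : ℝ) ^ (i + 1 + 1) * ((m + 1).choose (i + 1)) / (i + 1 : ℕ) =
        (-1 : ℝ) ^ i * (m.choose i) / ((i : ℝ) + 1) +
        (-1 : ℝ) ^ i * (m.choose (i + 1)) / ((i : ℝ) + 1) := by
      intro i
      rw [Nat.choose_succ_succ']
      push_cast
      ring
    simp_rw [split]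
    rw [Finset.sum_add_distrib, alt_choose_div_succ]
    have hB : ∑ i ∈ range (m + 1), (-1 : ℝ) ^ i * (m.choose (i + 1)) / ((i : ℝ) + 1) =
        ∑ j ∈ range (m + 1), (-1 : ℝ) ^ (j + 1) * (m.choose j) / j := by
      rw [Finset.sum_range_succ, Nat.choose_succ_self]
      rw [Finset.sum_range_succ' (fun j => (-1 : ℝ) ^ (j + 1) * (m.choose j) / j) m]
      simp only [Nat.cast_zero, div_zero, add_zero, Nat.cast_zero, mul_zero, zero_div]
      refine Finset.sum_congr rfl fun i _ => by push_cast; ring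
    rw [hB, ih, Finset.sum_range_succ]
    ring

/-- `Σ_{k=0}^{n} (−1)^k C(n,k)/(k+1)² = (1/(n+1)) Σ_{k=0}^{n} 1/(k+1)`. -/
theorem alternating_binom_div_succ_sq (n : ℕ) :
    ∑ k ∈ Finset.range (n + 1), (-1 : ℝ) ^ k * (n.choose k) / (k + 1) ^ 2 =
      (1 / (n + 1)) * ∑ k ∈ Finset.range (n + 1), (1 : ℝ) / (k + 1) := by
  have hn : ((n : ℝ) + 1) ≠ 0 := by positivity
  have key : ∀ k : ℕ, ((n : ℝ) + 1) * ((-1 : ℝ) ^ k * (n.choose k) / ((k : ℝ) + 1) ^ 2) =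
      (-1 : ℝ) ^ k * ((n + 1).choose (k + 1)) / ((k : ℝ) + 1) := by
    intro k
    have h' : ((n : ℝ) + 1) * (n.choose k) = ((n + 1).choose (k + 1)) * ((k : ℝ) + 1) := by
      exact_mod_cast Nat.add_one_mul_choose_eq n k
    have hk : ((k : ℝ) + 1) ≠ 0 := by positivity
    rw [mul_div_assoc' ((n : ℝ) + 1), div_eq_div_iff (by positivity) (by positivity)]
    linear_combination ((-1 : ℝ) ^ k * ((k : ℝ) + 1)) * h'
  have hmain : ((n : ℝ) + 1) * ∑ k ∈ range (n + 1), (-1 : ℝ) ^ k * (n.choose k) / ((k : ℝ) + 1) ^ 2 =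
      ∑ k ∈ range (n + 1), (1 : ℝ) / (k + 1) := by
    rw [Finset.mul_sum]
    simp_rw [key]
    have := alt_harmonic (n + 1)
    rw [Finset.sum_range_succ' (fun j => (-1 : ℝ) ^ (j + 1) * ((n + 1).choose j) / j) (n + 1)] at this
    simp only [Nat.cast_zero, div_zero, add_zero] at this
    rw [← this]
    refine Finset.sum_congr rfl fun i _ => by push_cast; ring
  rw [← hmain]
  field_simp
end
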